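/- Let μ be a Borel probability measure on ℝⁿ with compact support and let m be an integer with 1 ≤ m ≤ n. Then dim_P^m μ = m if and only if m ≤ D(μ), where D(μ) = inf_{θ∈(0,1)} dim_{P,θ}^n μ is the critical point of μ. -/

import Mathlib

open MeasureTheory Metric Filter Set Topology
open scoped ENNReal

noncomputable section
open scoped Classical

/-- The support of a Borel measure `μ`: the set of points all of whose
neighborhoods have positive measure. -/
def msupp {n : ℕ} (μ : Measure (EuclideanSpace ℝ (Fin n))) :
    Set (EuclideanSpace ℝ (Fin n)) :=
  {x | ∀ r : ℝ, 0 < r → 0 < μ (Metric.ball x r)}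

/-- The Assouad dimension of a set `E ⊆ ℝⁿ`: the infimum of all `s ≥ 0` for which
there is `C > 0` such that for all `0 < r < R` and `x ∈ E`, the set `E ∩ B(x,R)`
can be covered by at most `C (R/r)^s` balls of radius `r`. -/
def dimA {n : ℕ} (E : Set (EuclideanSpace ℝ (Fin n))) : ℝ :=
  sInf {s : ℝ | 0 ≤ s ∧ ∃ C : ℝ, 0 < C ∧ ∀ x ∈ E, ∀ r R : ℝ, 0 < r → r < R →
    ∃ F : Finset (EuclideanSpace ℝ (Fin n)), (F.card : ℝ) ≤ C * (R / r) ^ s ∧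
      E ∩ Metric.closedBall x R ⊆ ⋃ y ∈ F, Metric.closedBall y r}

/-- The packing dimension of a measure:
`dim_P μ = sup {t ≥ 0 : liminf_{r→0} μ(B(x,r))/r^t = 0 for μ-a.e. x}`. -/
def dimP {n : ℕ} (μ : Measure (EuclideanSpace ℝ (Fin n))) : ℝ :=
  sSup {t : ℝ | 0 ≤ t ∧ ∀ᵐ x ∂μ,
    Filter.liminf (fun r : ℝ =>
      μ (Metric.closedBall x r) / ENNReal.ofReal (r ^ t)) (𝓝[>] 0) = 0}

/-- The potential `F_m^μ(x,r) = ∫ min{1, r^m |x-y|^{-m}} dμ(y)`, with the convention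
that the integrand equals `1` when `y = x`. -/
def Fpot {n : ℕ} (m : ℝ) (μ : Measure (EuclideanSpace ℝ (Fin n)))
    (x : EuclideanSpace ℝ (Fin n)) (r : ℝ) : ℝ≥0∞ :=
  ∫⁻ y, ENNReal.ofReal (if y = x then 1 else min 1 (r ^ m * ‖x - y‖ ^ (-m))) ∂μ

/-- The `m`-dimensional packing dimension profile
`dim_P^m μ = sup {t ≥ 0 : liminf_{r→0} r^{-t} F_m^μ(x,r) = 0 for μ-a.e. x}`. -/
def dimPprofile {n : ℕ} (m : ℝ) (μ : Measure (EuclideanSpace ℝ (Fin n))) : ℝ :=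
  sSup {t : ℝ | 0 ≤ t ∧ ∀ᵐ x ∂μ,
    Filter.liminf (fun r : ℝ => Fpot m μ x r / ENNReal.ofReal (r ^ t)) (𝓝[>] 0) = 0}

/-- The potential
`F_{t,s,θ}^μ(x,r) = ∫ min{1, r^t |x-y|^{-t}, r^{θ(s-t)+t} |x-y|^{-s}} dμ(y)`,
with the convention that the integrand equals `1` when `y = x`. -/
def Ftheta {n : ℕ} (t s θ : ℝ) (μ : Measure (EuclideanSpace ℝ (Fin n)))
    (x : EuclideanSpace ℝ (Fin n)) (r : ℝ) : ℝ≥0∞ :=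
  ∫⁻ y, ENNReal.ofReal (if y = x then 1 else
    min (min 1 (r ^ t * ‖x - y‖ ^ (-t))) (r ^ (θ * (s - t) + t) * ‖x - y‖ ^ (-s))) ∂μ

/-- The `θ`-profile
`dim_{P,θ}^s μ = sup {t ∈ [0,s] : liminf_{r→0} r^{-t} F_{t,s,θ}^μ(x,r) = 0 for μ-a.e. x}`. -/
def dimPtheta {n : ℕ} (s θ : ℝ) (μ : Measure (EuclideanSpace ℝ (Fin n))) : ℝ :=
  sSup {t : ℝ | t ∈ Set.Icc 0 s ∧ ∀ᵐ x ∂μ,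
    Filter.liminf (fun r : ℝ => Ftheta t s θ μ x r / ENNReal.ofReal (r ^ t)) (𝓝[>] 0) = 0}

/-- The critical point `D(μ) = inf_{θ ∈ (0,1)} dim_{P,θ}^n μ` of a measure on `ℝⁿ`. -/
def Dcrit (n : ℕ) (μ : Measure (EuclideanSpace ℝ (Fin n))) : ℝ :=
  sInf ((fun θ : ℝ => dimPtheta (n : ℝ) θ μ) '' Set.Ioo 0 1)

section AuxLemmas

open Filter

lemma aux_ev_Ioo {r₀ : ℝ} (h : 0 < r₀) : ∀ᶠ r in 𝓝[>] (0:ℝ), r ∈ Set.Ioo 0 r₀ :=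
  eventually_of_mem (Ioo_mem_nhdsGT_of_mem ⟨le_rfl, h⟩) (fun _ h => h)

lemma aux_liminf_zero {f g : ℝ → ℝ≥0∞} (c : ℝ≥0∞) (hc : c ≠ ⊤)
    (hg : Filter.liminf g (𝓝[>] (0:ℝ)) = 0)
    (h : ∀ᶠ r in 𝓝[>] (0:ℝ), f r ≤ c * g r) :
    Filter.liminf f (𝓝[>] (0:ℝ)) = 0 := by
  refine le_antisymm ?_ zero_le
  have key : ∀ ε : ℝ≥0∞, 0 < ε → Filter.liminf f (𝓝[>] (0:ℝ)) ≤ c * ε := by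
    intro ε hε
    have hfreq : ∃ᶠ r in 𝓝[>] (0:ℝ), g r < ε := by
      exact frequently_lt_of_liminf_lt (by isBoundedDefault) (by rw [hg]; exact hε)
    have h2 : ∃ᶠ r in 𝓝[>] (0:ℝ), f r ≤ c * ε :=
      (hfreq.and_eventually h).mono (fun r ⟨h1, h2⟩ => h2.trans (mul_le_mul_right h1.le c))
    exact liminf_le_of_frequently_le' h2
  rcases eq_or_ne c 0 with rfl | hc0
  · simpa using key 1 one_pos
  · refine ENNReal.le_of_forall_pos_le_add (fun ε hε _ => ?_)
    have hd : (0:ℝ≥0∞) < (ε : ℝ≥0∞) / c :=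
      ENNReal.div_pos (by exact_mod_cast hε.ne') hc
    have := key _ hd
    rw [ENNReal.mul_div_cancel hc0 hc] at this
    simpa using this

lemma msupp_compl_null {n : ℕ} (μ : Measure (EuclideanSpace ℝ (Fin n))) :
    μ ((msupp μ)ᶜ) = 0 := by
  classical
  set V := (msupp μ)ᶜ with hV
  have hx : ∀ x : V, ∃ r : ℝ, 0 < r ∧ μ (Metric.ball (x : EuclideanSpace ℝ (Fin n)) r) = 0 := by
    rintro ⟨x, hxV⟩
    have : ¬ (∀ r : ℝ, 0 < r → 0 < μ (Metric.ball x r)) := hxV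
    push_neg at this
    obtain ⟨r, hr, hr0⟩ := this
    exact ⟨r, hr, le_antisymm hr0 zero_le⟩
  choose rad hrad hnull using hx
  obtain ⟨T, hTc, hTU⟩ := TopologicalSpace.isOpen_iUnion_countable
    (fun x : V => Metric.ball (x : EuclideanSpace ℝ (Fin n)) (rad x))
    (fun x => Metric.isOpen_ball)
  have hVsub : V ⊆ ⋃ x ∈ T, Metric.ball (x : EuclideanSpace ℝ (Fin n)) (rad x) := by
    rw [hTU]
    intro y hy
    exact Set.mem_iUnion.2 ⟨⟨y, hy⟩, Metric.mem_ball_self (hrad ⟨y, hy⟩)⟩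
  refine le_antisymm ?_ zero_le
  calc μ V ≤ μ (⋃ x ∈ T, Metric.ball (x : EuclideanSpace ℝ (Fin n)) (rad x)) :=
        measure_mono hVsub
    _ ≤ ∑' x : T, μ (Metric.ball (x : EuclideanSpace ℝ (Fin n)) (rad x)) := by
        haveI := hTc.to_subtype
        exact (measure_biUnion_le μ hTc _)
    _ = 0 := by simp [hnull]

lemma ae_msupp {n : ℕ} (μ : Measure (EuclideanSpace ℝ (Fin n))) :
    ∀ᵐ x ∂μ, x ∈ msupp μ := by
  have := msupp_compl_null μ
  exact (MeasureTheory.ae_iff).2 (by exact this)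

end AuxLemmas
section AuxDefs

open Filter

/-- Auxiliary: property `P_m(t)`. -/
def Pprop {n : ℕ} (m t : ℝ) (μ : Measure (EuclideanSpace ℝ (Fin n))) : Prop :=
  ∀ᵐ x ∂μ, Filter.liminf (fun r : ℝ => Fpot m μ x r / ENNReal.ofReal (r ^ t)) (𝓝[>] 0) = 0

/-- Auxiliary: property `Q_{s,θ}(t)`. -/
def Qprop {n : ℕ} (t s θ : ℝ) (μ : Measure (EuclideanSpace ℝ (Fin n))) : Prop :=
  ∀ᵐ x ∂μ, Filter.liminf (fun r : ℝ => Ftheta t s θ μ x r / ENNReal.ofReal (r ^ t)) (𝓝[>] 0) = 0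

lemma dimPprofile_eq_sSup {n : ℕ} (m : ℝ) (μ : Measure (EuclideanSpace ℝ (Fin n))) :
    dimPprofile m μ = sSup {t : ℝ | 0 ≤ t ∧ Pprop m t μ} := rfl

lemma dimPtheta_eq_sSup {n : ℕ} (s θ : ℝ) (μ : Measure (EuclideanSpace ℝ (Fin n))) :
    dimPtheta s θ μ = sSup {t : ℝ | t ∈ Set.Icc 0 s ∧ Qprop t s θ μ} := rfl

lemma Pprop_mono {n : ℕ} {m t t' : ℝ} {μ : Measure (EuclideanSpace ℝ (Fin n))}
    (h0 : 0 ≤ t') (htt : t' ≤ t) (hP : Pprop m t μ) : Pprop m t' μ := by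
  filter_upwards [hP] with x hx
  refine aux_liminf_zero 1 (by simp) hx ?_
  filter_upwards [aux_ev_Ioo one_pos] with r hr
  rw [one_mul]
  exact ENNReal.div_le_div_left (ENNReal.ofReal_le_ofReal
    (Real.rpow_le_rpow_of_exponent_ge hr.1 hr.2.le htt)) _

lemma exists_diam_bound {n : ℕ} {μ : Measure (EuclideanSpace ℝ (Fin n))}
    (hE : IsCompact (msupp μ)) :
    ∃ D : ℝ, 1 ≤ D ∧ ∀ x ∈ msupp μ, ∀ y ∈ msupp μ, ‖x - y‖ ≤ D := by
  obtain ⟨C, hC⟩ := Metric.isBounded_iff.1 hE.isBounded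
  refine ⟨max C 1, le_max_right _ _, fun x hx y hy => ?_⟩
  rw [← dist_eq_norm]
  exact le_trans (hC hx hy) (le_max_left _ _)

end AuxDefs
section LowerBd

open Filter

lemma not_Pprop_m {n : ℕ} {μ : Measure (EuclideanSpace ℝ (Fin n))} [IsProbabilityMeasure μ]
    (hE : IsCompact (msupp μ)) {m : ℝ} (hm : 0 ≤ m) : ¬ Pprop m m μ := by
  intro hP
  obtain ⟨D, hD, hDb⟩ := exists_diam_bound hE
  have hDm : (0:ℝ) < D ^ (-m) := Real.rpow_pos_of_pos (lt_of_lt_of_le one_pos hD) _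
  have hDm1 : D ^ (-m) ≤ 1 :=
    Real.rpow_le_one_of_one_le_of_nonpos hD (neg_nonpos.2 hm)
  obtain ⟨x, hx0, hxs⟩ := (hP.and (ae_msupp μ)).exists
  have hev : ∀ᶠ r in 𝓝[>] (0:ℝ),
      ENNReal.ofReal (D ^ (-m)) ≤ Fpot m μ x r / ENNReal.ofReal (r ^ m) := by
    filter_upwards [aux_ev_Ioo one_pos] with r hr
    have hrm : (0:ℝ) < r ^ m := Real.rpow_pos_of_pos hr.1 _
    have hrm1 : r ^ m ≤ 1 := Real.rpow_le_one hr.1.le hr.2.le hm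
    have hF : ENNReal.ofReal (r ^ m * D ^ (-m)) ≤ Fpot m μ x r := by
      have : ∫⁻ _, ENNReal.ofReal (r ^ m * D ^ (-m)) ∂μ
          = ENNReal.ofReal (r ^ m * D ^ (-m)) := by
        simp [MeasureTheory.lintegral_const]
      rw [← this]
      refine MeasureTheory.lintegral_mono_ae ?_
      filter_upwards [ae_msupp μ] with y hy
      refine ENNReal.ofReal_le_ofReal ?_
      by_cases hyx : y = x
      · simp only [hyx, if_pos rfl]
        exact mul_le_one₀ hrm1 hDm.le hDm1
      · rw [if_neg hyx]
        have hu : (0:ℝ) < ‖x - y‖ := by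
          rw [norm_pos_iff, sub_ne_zero]
          exact fun h => hyx h.symm
        have huD : ‖x - y‖ ≤ D := hDb x hxs y hy
        refine le_min (mul_le_one₀ hrm1 hDm.le hDm1) ?_
        refine mul_le_mul_of_nonneg_left ?_ hrm.le
        exact Real.rpow_le_rpow_of_nonpos hu huD (neg_nonpos.2 hm)
    rw [ENNReal.le_div_iff_mul_le (Or.inl (by positivity)) (Or.inl ENNReal.ofReal_ne_top)]
    rw [← ENNReal.ofReal_mul hDm.le, mul_comm]
    exact hF
  have hlim : ENNReal.ofReal (D ^ (-m))
      ≤ Filter.liminf (fun r : ℝ => Fpot m μ x r / ENNReal.ofReal (r ^ m)) (𝓝[>] 0) :=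
    le_liminf_of_le (by isBoundedDefault) hev
  rw [hx0] at hlim
  exact absurd (le_antisymm hlim zero_le).symm (by simpa using hDm)

lemma not_Pprop_gt {n : ℕ} {μ : Measure (EuclideanSpace ℝ (Fin n))} [IsProbabilityMeasure μ]
    (hE : IsCompact (msupp μ)) {m t : ℝ} (hm : 0 ≤ m) (ht : m ≤ t) : ¬ Pprop m t μ :=
  fun hP => not_Pprop_m hE hm (Pprop_mono hm ht hP)

end LowerBd
section QMono

open Filter

lemma Qprop_mono {n : ℕ} {μ : Measure (EuclideanSpace ℝ (Fin n))}
    (hE : IsCompact (msupp μ)) {s θ t t' : ℝ} (hθ : 0 < θ)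
    (h0 : 0 ≤ t') (htt : t' ≤ t) (hQ : Qprop t s θ μ) : Qprop t' s θ μ := by
  obtain ⟨D, hD, hDb⟩ := exists_diam_bound hE
  set C : ℝ := max 1 (D ^ (t - t')) with hC
  have hC1 : (1:ℝ) ≤ C := le_max_left _ _
  have hC0 : (0:ℝ) ≤ C := le_trans zero_le_one hC1
  filter_upwards [hQ, ae_msupp μ] with x hx hxs
  refine aux_liminf_zero (ENNReal.ofReal C) ENNReal.ofReal_ne_top hx ?_
  filter_upwards [aux_ev_Ioo one_pos] with r hr
  have hr0 : (0:ℝ) < r := hr.1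
  have hr1 : r ≤ 1 := hr.2.le
  have hrt : (0:ℝ) < r ^ t := Real.rpow_pos_of_pos hr0 _
  have hrt' : (0:ℝ) < r ^ t' := Real.rpow_pos_of_pos hr0 _
  have hratio : (1:ℝ) ≤ r ^ (t' - t) :=
    Real.one_le_rpow_of_pos_of_le_one_of_nonpos hr0 hr1 (by linarith)
  -- pointwise kernel inequality
  have hkernel : Ftheta t' s θ μ x r
      ≤ ENNReal.ofReal (C * r ^ (t' - t)) * Ftheta t s θ μ x r := by
    rw [Ftheta, Ftheta, ← MeasureTheory.lintegral_const_mul' _ _ ENNReal.ofReal_ne_top]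
    refine MeasureTheory.lintegral_mono_ae ?_
    filter_upwards [ae_msupp μ] with y hy
    rw [← ENNReal.ofReal_mul (by positivity)]
    refine ENNReal.ofReal_le_ofReal ?_
    by_cases hyx : y = x
    · simp only [if_pos hyx]
      nlinarith
    · simp only [if_neg hyx]
      have hu : (0:ℝ) < ‖x - y‖ := by
        rw [norm_pos_iff, sub_ne_zero]; exact fun h => hyx h.symm
      have huD : ‖x - y‖ ≤ D := hDb x hxs y hy
      have hum : ∀ a : ℝ, (0:ℝ) < ‖x - y‖ ^ a := fun a => Real.rpow_pos_of_pos hu _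
      rw [mul_min_of_nonneg _ _ (by positivity), mul_min_of_nonneg _ _ (by positivity)]
      refine le_min (le_min ?_ ?_) ?_
      · calc min (min 1 (r ^ t' * ‖x - y‖ ^ (-t'))) (r ^ (θ * (s - t') + t') * ‖x - y‖ ^ (-s))
            ≤ 1 := le_trans (min_le_left _ _) (min_le_left _ _)
          _ ≤ C * r ^ (t' - t) * 1 := by nlinarith
      · refine le_trans (le_trans (min_le_left _ _) (min_le_right _ _)) ?_
        have h1 : ‖x - y‖ ^ (-t') = ‖x - y‖ ^ (-t) * ‖x - y‖ ^ (t - t') := by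
          rw [← Real.rpow_add hu]; ring_nf
        have h2 : ‖x - y‖ ^ (t - t') ≤ D ^ (t - t') :=
          Real.rpow_le_rpow hu.le huD (by linarith)
        have h3 : r ^ t' = r ^ (t' - t) * r ^ t := by
          rw [← Real.rpow_add hr0]; ring_nf
        have h4 : D ^ (t - t') ≤ C := le_max_right _ _
        calc r ^ t' * ‖x - y‖ ^ (-t')
            = (r ^ (t' - t) * r ^ t) * (‖x - y‖ ^ (-t) * ‖x - y‖ ^ (t - t')) := by
              rw [← h1, ← h3]
          _ ≤ (r ^ (t' - t) * r ^ t) * (‖x - y‖ ^ (-t) * C) := by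
              have h5 : ‖x - y‖ ^ (t - t') ≤ C := le_trans h2 h4
              exact mul_le_mul_of_nonneg_left
                (mul_le_mul_of_nonneg_left h5 (hum (-t)).le) (by positivity)
          _ = C * r ^ (t' - t) * (r ^ t * ‖x - y‖ ^ (-t)) := by ring
      · refine le_trans (min_le_right _ _) ?_
        have h1 : r ^ (θ * (s - t') + t') ≤ r ^ ((t' - t) + (θ * (s - t) + t)) := by
          refine Real.rpow_le_rpow_of_exponent_ge hr0 hr1 ?_
          nlinarith
        have h2 : r ^ ((t' - t) + (θ * (s - t) + t)) = r ^ (t' - t) * r ^ (θ * (s - t) + t) :=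
          Real.rpow_add hr0 _ _
        calc r ^ (θ * (s - t') + t') * ‖x - y‖ ^ (-s)
            ≤ (r ^ (t' - t) * r ^ (θ * (s - t) + t)) * ‖x - y‖ ^ (-s) := by
              rw [← h2]
              exact mul_le_mul_of_nonneg_right h1 (hum (-s)).le
          _ = r ^ (t' - t) * (r ^ (θ * (s - t) + t) * ‖x - y‖ ^ (-s)) := by ring
          _ ≤ C * (r ^ (t' - t) * (r ^ (θ * (s - t) + t) * ‖x - y‖ ^ (-s))) :=
              le_mul_of_one_le_left (by positivity) hC1
          _ = C * r ^ (t' - t) * (r ^ (θ * (s - t) + t) * ‖x - y‖ ^ (-s)) := by ring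
    -- end kernel
  have ha0 : ENNReal.ofReal (r ^ t') ≠ 0 := by positivity
  have hatop : ENNReal.ofReal (r ^ t') ≠ ⊤ := ENNReal.ofReal_ne_top
  rw [ENNReal.div_le_iff ha0 hatop]
  refine le_trans hkernel (le_of_eq ?_)
  have hsplit : ENNReal.ofReal (C * r ^ (t' - t))
      = ENNReal.ofReal C * (ENNReal.ofReal (r ^ t') / ENNReal.ofReal (r ^ t)) := by
    rw [← ENNReal.ofReal_div_of_pos hrt, ← ENNReal.ofReal_mul hC0]
    congr 1
    rw [← Real.rpow_sub hr0]
  rw [hsplit]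
  have hb0 : ENNReal.ofReal (r ^ t) ≠ 0 := by positivity
  have hbtop : ENNReal.ofReal (r ^ t) ≠ ⊤ := ENNReal.ofReal_ne_top
  rw [div_eq_mul_inv, div_eq_mul_inv]
  ring

end QMono
section SupChar

open Filter

lemma dimPprofile_eq_iff {n : ℕ} {μ : Measure (EuclideanSpace ℝ (Fin n))}
    [IsProbabilityMeasure μ] (hE : IsCompact (msupp μ)) {m : ℝ} (hm : 0 < m) :
    dimPprofile m μ = m ↔ ∀ t, 0 ≤ t → t < m → Pprop m t μ := by
  rw [dimPprofile_eq_sSup]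
  set S := {t : ℝ | 0 ≤ t ∧ Pprop m t μ} with hS
  have hub : ∀ t ∈ S, t ≤ m := by
    intro t ht
    by_contra hlt
    push_neg at hlt
    exact not_Pprop_gt hE hm.le hlt.le ht.2
  constructor
  · intro h t h0 htm
    by_contra hnP
    have hle : ∀ t' ∈ S, t' ≤ t := by
      intro t' ht'
      by_contra h'
      push_neg at h'
      exact hnP (Pprop_mono h0 h'.le ht'.2)
    have := Real.sSup_le hle h0
    rw [h] at this
    linarith
  · intro h
    refine le_antisymm (Real.sSup_le hub hm.le) ?_
    by_contra hlt
    push_neg at hlt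
    set t' := (max (sSup S) 0 + m) / 2 with ht'd
    have hmax0 : (0:ℝ) ≤ max (sSup S) 0 := le_max_right _ _
    have hmaxm : max (sSup S) 0 < m := max_lt hlt hm
    have h1 : 0 ≤ t' := by rw [ht'd]; linarith
    have h2 : t' < m := by rw [ht'd]; linarith
    have h3 : t' ∈ S := ⟨h1, h _ h1 h2⟩
    have h4 : t' ≤ sSup S := le_csSup ⟨m, hub⟩ h3
    have h5 : sSup S < t' := by
      have := le_max_left (sSup S) 0
      rw [ht'd]; linarith
    linarith

lemma le_dimPtheta_iff {n : ℕ} {μ : Measure (EuclideanSpace ℝ (Fin n))}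
    [IsProbabilityMeasure μ] (hE : IsCompact (msupp μ)) {s θ m : ℝ}
    (hθ : 0 < θ) (hm : 0 < m) (hms : m ≤ s) :
    m ≤ dimPtheta s θ μ ↔ ∀ t, 0 ≤ t → t < m → Qprop t s θ μ := by
  rw [dimPtheta_eq_sSup]
  set T := {t : ℝ | t ∈ Set.Icc 0 s ∧ Qprop t s θ μ} with hT
  have hub : ∀ t ∈ T, t ≤ s := fun t ht => ht.1.2
  constructor
  · intro h t h0 htm
    have hex : ∃ t' ∈ T, t < t' := by
      by_contra h'
      push_neg at h'
      have := Real.sSup_le h' h0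
      linarith
    obtain ⟨t'', ht'', htt⟩ := hex
    exact Qprop_mono hE hθ h0 htt.le ht''.2
  · intro h
    by_contra hlt
    push_neg at hlt
    set t' := (max (sSup T) 0 + m) / 2 with ht'd
    have hmax0 : (0:ℝ) ≤ max (sSup T) 0 := le_max_right _ _
    have hmaxm : max (sSup T) 0 < m := max_lt hlt hm
    have h1 : 0 ≤ t' := by rw [ht'd]; linarith
    have h2 : t' < m := by rw [ht'd]; linarith
    have h3 : t' ∈ T := ⟨⟨h1, le_trans h2.le hms⟩, h _ h1 h2⟩
    have h4 : t' ≤ sSup T := le_csSup ⟨s, hub⟩ h3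
    have h5 : sSup T < t' := by
      have := le_max_left (sSup T) 0
      rw [ht'd]; linarith
    linarith

lemma le_Dcrit_iff {n : ℕ} {μ : Measure (EuclideanSpace ℝ (Fin n))} {m : ℝ} (hm : 0 ≤ m) :
    m ≤ Dcrit n μ ↔ ∀ θ : ℝ, θ ∈ Set.Ioo (0:ℝ) 1 → m ≤ dimPtheta (n : ℝ) θ μ := by
  have hne : ((fun θ : ℝ => dimPtheta (n : ℝ) θ μ) '' Set.Ioo 0 1).Nonempty :=
    ⟨_, Set.mem_image_of_mem _ (by norm_num : (1/2 : ℝ) ∈ Set.Ioo (0:ℝ) 1)⟩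
  have hbdd : BddBelow ((fun θ : ℝ => dimPtheta (n : ℝ) θ μ) '' Set.Ioo 0 1) := by
    refine ⟨0, fun a ha => ?_⟩
    obtain ⟨θ, _, rfl⟩ := ha
    exact Real.sSup_nonneg (fun t ht => ht.1.1)
  constructor
  · intro h θ hθ
    exact le_trans h (csInf_le hbdd (Set.mem_image_of_mem _ hθ))
  · intro h
    exact le_csInf hne (by rintro a ⟨θ, hθ, rfl⟩; exact h θ hθ)

end SupChar
section Core1

open Filter

lemma Qprop_of_Pprop {n : ℕ} {μ : Measure (EuclideanSpace ℝ (Fin n))}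
    {m s t θ : ℝ} (hθ0 : 0 < θ) (hθ1 : θ ≤ 1) (h0 : 0 ≤ t) (htm : t < m) (hms : m ≤ s)
    (hP : Pprop m (m - θ * (m - t)) μ) : Qprop t s θ μ := by
  set t' := m - θ * (m - t) with ht'd
  filter_upwards [hP] with x hx
  refine aux_liminf_zero 1 (by simp) hx ?_
  filter_upwards [aux_ev_Ioo one_pos] with r hr
  have hr0 : (0:ℝ) < r := hr.1
  have hr1 : r ≤ 1 := hr.2.le
  set σ := r ^ θ with hσd
  have hσ0 : (0:ℝ) < σ := Real.rpow_pos_of_pos hr0 _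
  have hσr : r ≤ σ := by
    have := Real.rpow_le_rpow_of_exponent_ge hr0 hr1 hθ1
    rwa [Real.rpow_one] at this
  set c := r ^ ((θ - 1) * (m - t)) with hcd
  have hc0 : (0:ℝ) < c := Real.rpow_pos_of_pos hr0 _
  have hc1 : (1:ℝ) ≤ c := by
    refine Real.one_le_rpow_of_pos_of_le_one_of_nonpos hr0 hr1 ?_
    nlinarith
  have hcrm : c * r ^ m = σ ^ (m - t) * r ^ t := by
    rw [hσd, ← Real.rpow_mul hr0.le, ← Real.rpow_add hr0, ← Real.rpow_add hr0]
    congr 1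
    ring
  have hkernel : Ftheta t s θ μ x r ≤ ENNReal.ofReal c * Fpot m μ x r := by
    rw [Ftheta, Fpot, ← MeasureTheory.lintegral_const_mul' _ _ ENNReal.ofReal_ne_top]
    refine MeasureTheory.lintegral_mono (fun y => ?_)
    rw [← ENNReal.ofReal_mul hc0.le]
    refine ENNReal.ofReal_le_ofReal ?_
    by_cases hyx : y = x
    · simp only [if_pos hyx]
      linarith
    · simp only [if_neg hyx]
      have hu : (0:ℝ) < ‖x - y‖ := by
        rw [norm_pos_iff, sub_ne_zero]; exact fun h => hyx h.symm
      set u := ‖x - y‖ with hud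
      have hum : ∀ a : ℝ, (0:ℝ) < u ^ a := fun a => Real.rpow_pos_of_pos hu _
      rcases le_or_gt u r with hur | hru
      · -- u ≤ r : RHS min is 1
        have h1 : (1:ℝ) ≤ r ^ m * u ^ (-m) := by
          have h2 : r ^ (-m) ≤ u ^ (-m) :=
            Real.rpow_le_rpow_of_nonpos hu hur (by linarith)
          have h3 : r ^ m * r ^ (-m) = 1 := by
            rw [← Real.rpow_add hr0]; simp
          nlinarith [Real.rpow_pos_of_pos hr0 m]
        rw [min_eq_left h1]
        calc min (min 1 (r ^ t * u ^ (-t))) (r ^ (θ * (s - t) + t) * u ^ (-s))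
            ≤ 1 := le_trans (min_le_left _ _) (min_le_left _ _)
          _ ≤ c * 1 := by linarith
      · -- r ≤ u
        have hmin : min 1 (r ^ m * u ^ (-m)) = r ^ m * u ^ (-m) := by
          refine min_eq_right ?_
          have h2 : u ^ (-m) ≤ r ^ (-m) :=
            Real.rpow_le_rpow_of_nonpos hr0 hru.le (by linarith)
          have h3 : r ^ m * r ^ (-m) = 1 := by
            rw [← Real.rpow_add hr0]; simp
          nlinarith [Real.rpow_pos_of_pos hr0 m]
        rw [hmin]
        rcases le_or_gt u σ with huσ | hσu
        · -- middle range
          refine le_trans (le_trans (min_le_left _ _) (min_le_right _ _)) ?_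
          have h1 : u ^ (-t) = u ^ (m - t) * u ^ (-m) := by
            rw [← Real.rpow_add hu]; congr 1; ring
          have h2 : u ^ (m - t) ≤ σ ^ (m - t) :=
            Real.rpow_le_rpow hu.le huσ (by linarith)
          calc r ^ t * u ^ (-t) = r ^ t * (u ^ (m - t) * u ^ (-m)) := by rw [h1]
              _ ≤ r ^ t * (σ ^ (m - t) * u ^ (-m)) := by
                  refine mul_le_mul_of_nonneg_left
                    (mul_le_mul_of_nonneg_right h2 (hum (-m)).le) ?_
                  positivity
              _ = (c * r ^ m) * u ^ (-m) := by rw [hcrm]; ring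
              _ = c * (r ^ m * u ^ (-m)) := by ring
        · -- far range
          refine le_trans (min_le_right _ _) ?_
          have hid : r ^ (θ * (s - t) + t) = σ ^ (s - t) * r ^ t := by
            rw [hσd, ← Real.rpow_mul hr0.le, ← Real.rpow_add hr0]
          have h1 : σ ^ (s - t) = σ ^ (m - t) * σ ^ (s - m) := by
            rw [← Real.rpow_add hσ0]; congr 1; ring
          have h2 : σ ^ (s - m) ≤ u ^ (s - m) :=
            Real.rpow_le_rpow hσ0.le hσu.le (by linarith)
          have h3 : u ^ (s - m) * u ^ (-s) = u ^ (-m) := by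
            rw [← Real.rpow_add hu]; congr 1; ring
          calc r ^ (θ * (s - t) + t) * u ^ (-s)
              = σ ^ (m - t) * (σ ^ (s - m) * u ^ (-s)) * r ^ t := by rw [hid, h1]; ring
            _ ≤ σ ^ (m - t) * (u ^ (s - m) * u ^ (-s)) * r ^ t := by
                refine mul_le_mul_of_nonneg_right (mul_le_mul_of_nonneg_left
                  (mul_le_mul_of_nonneg_right h2 (hum (-s)).le) (by positivity)) ?_
                positivity
            _ = (σ ^ (m - t) * r ^ t) * u ^ (-m) := by rw [h3]; ring
            _ = c * (r ^ m * u ^ (-m)) := by rw [← hcrm]; ring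
  -- now divide
  rw [one_mul]
  have hsplit : ENNReal.ofReal (r ^ t) = ENNReal.ofReal c * ENNReal.ofReal (r ^ t') := by
    rw [← ENNReal.ofReal_mul hc0.le]
    congr 1
    rw [hcd, ← Real.rpow_add hr0]
    congr 1
    rw [ht'd]; ring
  calc Ftheta t s θ μ x r / ENNReal.ofReal (r ^ t)
      ≤ (ENNReal.ofReal c * Fpot m μ x r) / ENNReal.ofReal (r ^ t) :=
        ENNReal.div_le_div_right hkernel _
    _ = (ENNReal.ofReal c * Fpot m μ x r) / (ENNReal.ofReal c * ENNReal.ofReal (r ^ t')) := by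
        rw [← hsplit]
    _ = Fpot m μ x r / ENNReal.ofReal (r ^ t') :=
        ENNReal.mul_div_mul_left _ _ (by positivity) ENNReal.ofReal_ne_top

end Core1
section Core2

open Filter

lemma Pprop_of_Qprop {n : ℕ} {μ : Measure (EuclideanSpace ℝ (Fin n))}
    (hE : IsCompact (msupp μ)) {m s t θ : ℝ} (hθ0 : 0 < θ)
    (h0 : 0 ≤ t) (htm : t < m) (hms : m ≤ s) (hsm : θ * (s - t) < m - t)
    (hQ : Qprop t s θ μ) : Pprop m t μ := by
  obtain ⟨D, hD, hDb⟩ := exists_diam_bound hE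
  have hD0 : (0:ℝ) < D := lt_of_lt_of_le one_pos hD
  set e := θ * (s - t) + t - m with hed
  have he : e < 0 := by rw [hed]; linarith
  set r₀ := min 1 (D ^ ((s - m) / e)) with hr₀d
  have hr₀ : (0:ℝ) < r₀ := lt_min one_pos (Real.rpow_pos_of_pos hD0 _)
  have hDe : ∀ r : ℝ, 0 < r → r ≤ r₀ → D ^ (s - m) ≤ r ^ e := by
    intro r hrp hrr
    have h1 : r ≤ D ^ ((s - m) / e) := le_trans hrr (min_le_right _ _)
    have h2 : (D ^ ((s - m) / e)) ^ e ≤ r ^ e :=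
      Real.rpow_le_rpow_of_nonpos hrp h1 he.le
    rwa [← Real.rpow_mul hD0.le, div_mul_cancel₀ _ he.ne] at h2
  filter_upwards [hQ, ae_msupp μ] with x hx hxs
  refine aux_liminf_zero 1 (by simp) hx ?_
  filter_upwards [aux_ev_Ioo hr₀] with r hr
  have hr0 : (0:ℝ) < r := hr.1
  have hrr₀ : r ≤ r₀ := hr.2.le
  have hr1 : r ≤ 1 := le_trans hrr₀ (min_le_left _ _)
  rw [one_mul]
  refine ENNReal.div_le_div_right ?_ _
  rw [Fpot, Ftheta]
  refine MeasureTheory.lintegral_mono_ae ?_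
  filter_upwards [ae_msupp μ] with y hy
  refine ENNReal.ofReal_le_ofReal ?_
  by_cases hyx : y = x
  · simp only [if_pos hyx]; exact le_refl 1
  · simp only [if_neg hyx]
    have hu : (0:ℝ) < ‖x - y‖ := by
      rw [norm_pos_iff, sub_ne_zero]; exact fun h => hyx h.symm
    set u := ‖x - y‖ with hud
    have huD : u ≤ D := hDb x hxs y hy
    have hum : ∀ a : ℝ, (0:ℝ) < u ^ a := fun a => Real.rpow_pos_of_pos hu _
    refine le_min (le_min (min_le_left _ _) ?_) ?_
    · -- ≤ r^t u^{-t}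
      rcases le_or_gt u r with hur | hru
      · have h1 : r ^ (-t) ≤ u ^ (-t) :=
          Real.rpow_le_rpow_of_nonpos hu hur (by linarith)
        have h2 : r ^ t * r ^ (-t) = 1 := by rw [← Real.rpow_add hr0]; simp
        calc min 1 (r ^ m * u ^ (-m)) ≤ 1 := min_le_left _ _
          _ ≤ r ^ t * u ^ (-t) := by nlinarith [Real.rpow_pos_of_pos hr0 t]
      · refine le_trans (min_le_right _ _) ?_
        have h1 : r ^ m = r ^ t * r ^ (m - t) := by
          rw [← Real.rpow_add hr0]; congr 1; ring
        have h2 : u ^ (-m) = u ^ (-t) * u ^ (t - m) := by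
          rw [← Real.rpow_add hu]; congr 1; ring
        have h3 : r ^ (m - t) ≤ u ^ (m - t) :=
          Real.rpow_le_rpow hr0.le hru.le (by linarith)
        have h4 : u ^ (m - t) * u ^ (t - m) = 1 := by
          rw [← Real.rpow_add hu]; simp
        have h5 : r ^ (m - t) * u ^ (t - m) ≤ 1 := by
          nlinarith [hum (t - m), hum (m - t)]
        calc r ^ m * u ^ (-m) = (r ^ t * u ^ (-t)) * (r ^ (m - t) * u ^ (t - m)) := by
              rw [h1, h2]; ring
          _ ≤ (r ^ t * u ^ (-t)) * 1 := by
              refine mul_le_mul_of_nonneg_left h5 ?_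
              positivity
          _ = r ^ t * u ^ (-t) := by ring
    · -- ≤ r^{θ(s-t)+t} u^{-s}
      have hexp : θ * (s - t) + t = m + e := by rw [hed]; ring
      rcases le_or_gt u r with hur | hru
      · have h1 : r ^ (-s) ≤ u ^ (-s) :=
          Real.rpow_le_rpow_of_nonpos hu hur (by linarith)
        have h2 : (1:ℝ) ≤ r ^ (θ * (s - t) + t - s) := by
          refine Real.one_le_rpow_of_pos_of_le_one_of_nonpos hr0 hr1 ?_
          nlinarith
        have h3 : r ^ (θ * (s - t) + t) * r ^ (-s) = r ^ (θ * (s - t) + t - s) := by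
          rw [← Real.rpow_add hr0]
          congr 1 <;> ring_nf
        calc min 1 (r ^ m * u ^ (-m)) ≤ 1 := min_le_left _ _
          _ ≤ r ^ (θ * (s - t) + t) * u ^ (-s) := by
              nlinarith [Real.rpow_pos_of_pos hr0 (θ * (s - t) + t)]
      · refine le_trans (min_le_right _ _) ?_
        have hkey : u ^ (s - m) ≤ r ^ e :=
          le_trans (Real.rpow_le_rpow hu.le huD (by linarith)) (hDe r hr0 hrr₀)
        have h1 : u ^ (-m) = u ^ (-s) * u ^ (s - m) := by
          rw [← Real.rpow_add hu]; congr 1; ring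
        have h2 : r ^ (m + e) = r ^ m * r ^ e := Real.rpow_add hr0 _ _
        calc r ^ m * u ^ (-m) = r ^ m * (u ^ (-s) * u ^ (s - m)) := by rw [h1]
            _ ≤ r ^ m * (u ^ (-s) * r ^ e) := by
                refine mul_le_mul_of_nonneg_left
                  (mul_le_mul_of_nonneg_left hkey (hum (-s)).le) ?_
                positivity
            _ = r ^ (θ * (s - t) + t) * u ^ (-s) := by rw [hexp, h2]; ring

end Core2
/-- For a Borel probability measure `μ` with compact support on `ℝⁿ` and an
integer `1 ≤ m ≤ n`: `dim_P^m μ = m` if and only if `m ≤ D(μ)`, where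
`D(μ) = inf_{θ∈(0,1)} dim_{P,θ}^n μ` is the critical point of `μ`. -/
theorem statement7 (n : ℕ) (μ : Measure (EuclideanSpace ℝ (Fin n))) [IsProbabilityMeasure μ]
    (hE : IsCompact (msupp μ)) (m : ℕ) (hm : 1 ≤ m) (hmn : m ≤ n) :
    dimPprofile (m : ℝ) μ = m ↔ (m : ℝ) ≤ Dcrit n μ := by
  have hm0 : (0:ℝ) < (m:ℝ) := Nat.cast_pos.mpr hm
  have hmn' : (m:ℝ) ≤ (n:ℝ) := Nat.cast_le.mpr hmn
  rw [dimPprofile_eq_iff hE hm0, le_Dcrit_iff hm0.le]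
  constructor
  · intro h θ hθ
    rw [le_dimPtheta_iff hE hθ.1 hm0 hmn']
    intro t h0 htm
    have hmt : (0:ℝ) < (m:ℝ) - t := by linarith
    have haux : θ * ((m:ℝ) - t) ≤ (m:ℝ) - t := by nlinarith [hθ.1, hθ.2]
    have ht' : (0:ℝ) ≤ (m:ℝ) - θ * ((m:ℝ) - t) := by linarith
    have ht'' : (m:ℝ) - θ * ((m:ℝ) - t) < (m:ℝ) := by nlinarith [hθ.1]
    exact Qprop_of_Pprop hθ.1 hθ.2.le h0 htm hmn' (h _ ht' ht'')
  · intro h t h0 htm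
    have hnt : (0:ℝ) < (n:ℝ) - t := by linarith
    have hmt : (0:ℝ) < (m:ℝ) - t := by linarith
    set θ := min (1/2 : ℝ) (((m:ℝ) - t) / (2 * ((n:ℝ) - t))) with hθd
    have hθ0 : 0 < θ := lt_min (by norm_num) (by positivity)
    have hθ1 : θ < 1 := lt_of_le_of_lt (min_le_left _ _) (by norm_num)
    have hθs : θ * ((n:ℝ) - t) < (m:ℝ) - t := by
      have h1 : θ ≤ ((m:ℝ) - t) / (2 * ((n:ℝ) - t)) := min_le_right _ _
      have h2 : θ * ((n:ℝ) - t) ≤ ((m:ℝ) - t) / 2 := by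
        calc θ * ((n:ℝ) - t) ≤ (((m:ℝ) - t) / (2 * ((n:ℝ) - t))) * ((n:ℝ) - t) :=
              mul_le_mul_of_nonneg_right h1 hnt.le
          _ = ((m:ℝ) - t) / 2 := by field_simp
      linarith
    have hQ := (le_dimPtheta_iff hE hθ0 hm0 hmn').1 (h θ ⟨hθ0, hθ1⟩) t h0 htm
    exact Pprop_of_Qprop hE hθ0 h0 htm hmn' hθs hQ
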